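/- arXiv:2304.08301 — 3 statements merged into one kernel-verified Lean document; each statement's English description precedes it below -/
import Mathlib

section
/- Let N ≥ 1, λ ∈ ℝ, let d₁ = ⋯ = d_N = 1 and d_{N+1} = ⋯ = d_{2N} = −1, let F : ℝ² → ℝ be even and continuously differentiable away from ℤ², and fix k ∈ ℤ². Suppose a = (a₁, …, a_{2N}) : [0,T) → (ℝ²)^{2N} is a C¹ solution of the reduced dynamical law ȧ_j − λ d_j 𝕁 ȧ_j = −(1/π) ∇_{a_j} W(a), whose components stay pairwise distinct modulo ℤ². Then the quantity ξ(a(t)) = Σ_{j=1}^{2N} a_j(t) − λ 𝕁 Σ_{j=1}^{2N} d_j a_j(t) is a first integral: ξ(a(t)) = ξ(a(0)) for all t ∈ [0,T). -/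
noncomputable section

open Real Set

/-- The symplectic matrix `𝕁` (rows `(0,1)` and `(−1,0)`) acting on `ℝ²`. -/
def Jmat (v : ℝ × ℝ) : ℝ × ℝ := (v.2, -v.1)

/-- The gradient vector of a function `F : ℝ² → ℝ`. -/
def gradF (F : ℝ × ℝ → ℝ) (p : ℝ × ℝ) : ℝ × ℝ :=
  (fderiv ℝ F p (1, 0), fderiv ℝ F p (0, 1))

/-- `Jmat` as a continuous linear map. -/
def Jclm : (ℝ × ℝ) →L[ℝ] ℝ × ℝ :=
  LinearMap.toContinuousLinearMap
    { toFun := Jmat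
      map_add' := by intro u v; simp [Jmat, Prod.ext_iff]; ring
      map_smul' := by intro c v; simp [Jmat, Prod.ext_iff] }

lemma Jclm_eq (v : ℝ × ℝ) : Jmat v = Jclm v := rfl


lemma gradF_odd (F : ℝ × ℝ → ℝ) (hFeven : ∀ p : ℝ × ℝ, F (-p) = F p)
    (p : ℝ × ℝ) (hdiff : DifferentiableAt ℝ F (-p)) :
    gradF F p = - gradF F (-p) := by
  have h1 : HasFDerivAt (fun x : ℝ × ℝ => -x) (-(ContinuousLinearMap.id ℝ (ℝ × ℝ))) p :=
    (hasFDerivAt_id p).neg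
  have h2 : HasFDerivAt (fun x : ℝ × ℝ => F (-x))
      ((fderiv ℝ F (-p)).comp (-(ContinuousLinearMap.id ℝ (ℝ × ℝ)))) p :=
    hdiff.hasFDerivAt.comp p h1
  have h3 : HasFDerivAt F
      ((fderiv ℝ F (-p)).comp (-(ContinuousLinearMap.id ℝ (ℝ × ℝ)))) p :=
    h2.congr_of_eventuallyEq (Filter.Eventually.of_forall fun x => (hFeven x).symm)
  rw [gradF, gradF, h3.fderiv]
  simp [Prod.ext_iff]

lemma dsum_zero (N : ℕ) (d : Fin (2*N) → ℝ)
    (hd : ∀ j : Fin (2*N), d j = if (j : ℕ) < N then 1 else -1) :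
    ∑ j, d j = 0 := by
  have : ∑ j : Fin (2*N), d j
      = ∑ i ∈ Finset.range (2*N), (if i < N then (1:ℝ) else -1) := by
    rw [← Fin.sum_univ_eq_sum_range (fun i => if i < N then (1:ℝ) else -1)]
    exact Finset.sum_congr rfl fun j _ => hd j
  rw [this, Finset.range_eq_Ico,
    ← Finset.sum_Ico_consecutive _ (Nat.zero_le N) (by omega : N ≤ 2*N)]
  have e1 : ∑ i ∈ Finset.Ico 0 N, (if i < N then (1:ℝ) else -1) = N := by
    rw [Finset.sum_congr rfl (fun i hi => if_pos (Finset.mem_Ico.mp hi).2)]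
    simp
  have e2 : ∑ i ∈ Finset.Ico N (2*N), (if i < N then (1:ℝ) else -1) = -(N:ℝ) := by
    rw [Finset.sum_congr rfl
      (fun i hi => if_neg (by exact Nat.not_lt.mpr (Finset.mem_Ico.mp hi).1))]
    rw [Finset.sum_const, Nat.card_Ico]
    have : 2*N - N = N := by omega
    rw [this]; simp
  rw [e1, e2]; ring

/-- along a C¹ solution of the reduced dynamical law
`ȧ_j − λ d_j 𝕁 ȧ_j = −(1/π) ∇_{a_j} W(a)`, the quantity
`ξ(a) = Σ_j a_j − λ 𝕁 Σ_j d_j a_j` is a first integral. -/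
theorem first_integral_of_RDL (N : ℕ) (hN : 1 ≤ N) (lam T : ℝ) (hT : 0 < T)
    (F : ℝ × ℝ → ℝ) (hFeven : ∀ p : ℝ × ℝ, F (-p) = F p)
    (hFC1 : ∀ p : ℝ × ℝ, (∀ m n : ℤ, p ≠ ((m : ℝ), (n : ℝ))) → ContDiffAt ℝ 1 F p)
    (k : ℤ × ℤ)
    (d : Fin (2*N) → ℝ) (hd : ∀ j : Fin (2*N), d j = if (j : ℕ) < N then 1 else -1)
    (q : (Fin (2*N) → ℝ × ℝ) → ℝ × ℝ)
    (hq : ∀ b : Fin (2*N) → ℝ × ℝ,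
      q b = (2*π) • ∑ l, d l • b l + (2*π) • (((k.1 : ℝ), (k.2 : ℝ)) : ℝ × ℝ))
    (a a' : ℝ → Fin (2*N) → ℝ × ℝ)
    (hderiv : ∀ t ∈ Ico (0:ℝ) T, ∀ j,
      HasDerivWithinAt (fun s => a s j) (a' t j) (Ico (0:ℝ) T) t)
    (hcont : ContinuousOn a' (Ico (0:ℝ) T))
    (hdist : ∀ t ∈ Ico (0:ℝ) T, ∀ j l : Fin (2*N), j ≠ l →
      ∀ m n : ℤ, a t j - a t l ≠ ((m : ℝ), (n : ℝ)))
    (hRDL : ∀ t ∈ Ico (0:ℝ) T, ∀ j : Fin (2*N),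
      a' t j - (lam * d j) • Jmat (a' t j)
        = (-(1/π)) • ((2*π*(d j)) •
            (-(∑ l ∈ Finset.univ.erase j, d l • gradF F (a t j - a t l)) + q (a t)))) :
    ∀ t ∈ Ico (0:ℝ) T,
      (∑ j, a t j) - lam • Jmat (∑ j, d j • a t j)
        = (∑ j, a 0 j) - lam • Jmat (∑ j, d j • a 0 j) := by
  have hdsum : ∑ j, d j = 0 := dsum_zero N d hd
  -- oddness of gradF at good points
  have hodd : ∀ p : ℝ × ℝ, (∀ m n : ℤ, p ≠ ((m : ℝ), (n : ℝ))) →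
      gradF F p = - gradF F (-p) := by
    intro p hp
    have hpn : ∀ m n : ℤ, -p ≠ ((m : ℝ), (n : ℝ)) := by
      intro m n h
      apply hp (-m) (-n)
      have : p = -(((m : ℝ), (n : ℝ)) : ℝ × ℝ) := by rw [← h]; simp
      rw [this]; push_cast; simp [Prod.ext_iff]
    exact gradF_odd F hFeven p ((hFC1 (-p) hpn).differentiableAt one_ne_zero)
  -- derivative of the conserved quantity is zero
  set f : ℝ → ℝ × ℝ := fun s => (∑ j, a s j) - lam • Jmat (∑ j, d j • a s j) with hf
  have key : ∀ s ∈ Ico (0:ℝ) T, HasDerivWithinAt f 0 (Ico (0:ℝ) T) s := by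
    intro s hs
    have h1 : HasDerivWithinAt (fun u => ∑ j, a u j) (∑ j, a' s j) (Ico (0:ℝ) T) s :=
      HasDerivWithinAt.fun_sum fun j _ => hderiv s hs j
    have h2 : HasDerivWithinAt (fun u => ∑ j, d j • a u j) (∑ j, d j • a' s j)
        (Ico (0:ℝ) T) s :=
      HasDerivWithinAt.fun_sum fun j _ => (hderiv s hs j).const_smul (d j)
    have h3 : HasDerivWithinAt (fun u => Jmat (∑ j, d j • a u j))
        (Jmat (∑ j, d j • a' s j)) (Ico (0:ℝ) T) s := by
      simp only [Jclm_eq]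
      exact Jclm.hasFDerivAt.comp_hasDerivWithinAt s h2
    have hD : HasDerivWithinAt f
        ((∑ j, a' s j) - lam • Jmat (∑ j, d j • a' s j)) (Ico (0:ℝ) T) s :=
      h1.sub (h3.const_smul lam)
    -- now show the derivative is zero
    have hzero : (∑ j, a' s j) - lam • Jmat (∑ j, d j • a' s j) = 0 := by
      set S : Fin (2*N) → ℝ × ℝ :=
        fun j => ∑ l ∈ Finset.univ.erase j, d l • gradF F (a s j - a s l) with hS
      set Q : ℝ × ℝ := q (a s) with hQ
      -- rewrite LHS as sum of RDL left sides
      have lhs_eq : (∑ j, a' s j) - lam • Jmat (∑ j, d j • a' s j)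
          = ∑ j, (a' s j - (lam * d j) • Jmat (a' s j)) := by
        rw [Finset.sum_sub_distrib]
        congr 1
        simp only [Jclm_eq, map_sum, map_smul, Finset.smul_sum, smul_smul]
      rw [lhs_eq]
      have term_eq : ∀ j : Fin (2*N),
          a' s j - (lam * d j) • Jmat (a' s j)
            = (2 * d j) • S j + (-(2 * d j)) • Q := by
        intro j
        rw [hRDL s hs j, smul_smul]
        have hpi : (-(1/π)) * (2*π*(d j)) = -(2 * d j) := by
          field_simp
        rw [hpi, smul_add, smul_neg, neg_smul, neg_neg, neg_smul]
      rw [Finset.sum_congr rfl fun j _ => term_eq j, Finset.sum_add_distrib]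
      have hQ0 : ∑ j, (-(2 * d j)) • Q = 0 := by
        rw [← Finset.sum_smul]
        have : ∑ j, -(2 * d j) = 0 := by
          simp [← Finset.mul_sum, hdsum]
        rw [this, zero_smul]
      rw [hQ0, add_zero]
      -- antisymmetric double sum
      set c : Fin (2*N) → Fin (2*N) → ℝ × ℝ := fun j l =>
        if j = l then 0 else (d j * d l) • gradF F (a s j - a s l) with hc
      have hSc : ∀ j, (2 * d j) • S j = (2:ℝ) • (∑ l, c j l) := by
        intro j
        have : d j • S j = ∑ l, c j l := by
          rw [hS, Finset.smul_sum]
          rw [← Finset.add_sum_erase _ (c j) (Finset.mem_univ j)]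
          simp only [hc, if_pos rfl, zero_add]
          refine Finset.sum_congr rfl fun l hl => ?_
          rw [if_neg (Finset.ne_of_mem_erase hl).symm, smul_smul]
        rw [← this, smul_smul]
      rw [Finset.sum_congr rfl fun j _ => hSc j, ← Finset.smul_sum]
      have hanti : ∀ j l, c l j = - c j l := by
        intro j l
        by_cases h : j = l
        · simp [hc, h]
        · rw [hc]
          simp only [if_neg (Ne.symm h), if_neg h]
          have := hodd (a s l - a s j) (hdist s hs l j (Ne.symm h))
          rw [this, neg_sub, mul_comm, smul_neg]
      have hT2 : (∑ j, ∑ l, c j l) = 0 := by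
        have h1 : (∑ j, ∑ l, c j l) = ∑ j, ∑ l, c l j := Finset.sum_comm
        have h2 : (∑ j, ∑ l, c j l) = -(∑ j, ∑ l, c j l) := by
          nth_rewrite 1 [h1]
          rw [← Finset.sum_neg_distrib]
          refine Finset.sum_congr rfl fun j _ => ?_
          rw [← Finset.sum_neg_distrib]
          exact Finset.sum_congr rfl fun l _ => hanti j l
        have h3 : (∑ j, ∑ l, c j l) + (∑ j, ∑ l, c j l) = 0 := by
          nth_rewrite 1 [h2]; simp
        have := congrArg (fun x => (2:ℝ)⁻¹ • x) (two_smul ℝ (∑ j, ∑ l, c j l) ▸ h3)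
        simpa [smul_smul] using this
      rw [hT2, smul_zero]
    rw [← hzero]
    exact hD
  intro t ht
  have h0 : (0:ℝ) ∈ Ico (0:ℝ) T := ⟨le_refl 0, hT⟩
  have hb := (convex_Ico (0:ℝ) T).norm_image_sub_le_of_norm_hasDerivWithin_le
    key (fun x _ => norm_zero.le) h0 ht
  have h1 : ‖f t - f 0‖ ≤ 0 := by simpa using hb
  exact sub_eq_zero.mp (norm_le_zero_iff.mp h1)
end
end

section
/- Let λ ∈ ℝ and let F : ℝ² → ℝ be ℤ²-periodic, continuously differentiable away from ℤ², and satisfy F(x,y) = F(−x,y) = F(x,−y) = F(y,x). Let (α, β) : [0,T) → ℝ² be a C¹ solution of α̇ = −2(∂_x F(2α, 0) + 4πα)/(1+λ²), β̇ = 2λ(∂_x F(2α, 0) + 4πα)/(1+λ²), with 2α(t) ∉ ℤ for all t. Then the curves a₁(t) = (0.5 + α(t), 0.5 + β(t)) and a₂(t) = (0.5 − α(t), 0.5 + β(t)) solve the reduced dynamical law ȧ_j − λ d_j 𝕁 ȧ_j = −(1/π) ∇_{a_j} W(a) for the two-vortex configuration with degrees d₁ = 1, d₂ = −1 and momentum branch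 q(a) = 2π(a₁ − a₂). Moreover λ α(t) + β(t) is constant in t, so the trajectory of (α(t), β(t)) lies on a straight line. -/
noncomputable section

open Real Set

lemma fderiv_clm_symm (F : ℝ × ℝ → ℝ) (σ : (ℝ × ℝ) →L[ℝ] (ℝ × ℝ))
    (hFσ : ∀ p, F (σ p) = F p) (p : ℝ × ℝ) (hD : DifferentiableAt ℝ F (σ p)) :
    ∀ v, fderiv ℝ F p v = fderiv ℝ F (σ p) (σ v) := by
  have h : HasFDerivAt F ((fderiv ℝ F (σ p)).comp σ) p := by
    have := (hD.hasFDerivAt).comp p σ.hasFDerivAt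
    rwa [show (F ∘ ⇑σ) = F from funext hFσ] at this
  intro v
  rw [h.fderiv]; rfl

lemma grad_props (F : ℝ × ℝ → ℝ)
    (hsym : ∀ x y : ℝ, F (x, y) = F (-x, y) ∧ F (x, y) = F (x, -y) ∧ F (x, y) = F (y, x))
    (hFC1 : ∀ p : ℝ × ℝ, (∀ m n : ℤ, p ≠ ((m : ℝ), (n : ℝ))) → ContDiffAt ℝ 1 F p)
    (x : ℝ) (hx : ∀ m : ℤ, x ≠ (m : ℝ)) :
    (gradF F (x, 0)).2 = 0 ∧ gradF F (-x, 0) = (-(gradF F (x, 0)).1, 0) := by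
  have hnl : ∀ m n : ℤ, ((x, 0) : ℝ × ℝ) ≠ ((m : ℝ), (n : ℝ)) := by
    intro m n h
    exact hx m (congrArg Prod.fst h)
  have hD : DifferentiableAt ℝ F (x, 0) := (hFC1 _ hnl).differentiableAt one_ne_zero
  -- y-reflection
  have σy : (ℝ × ℝ) →L[ℝ] (ℝ × ℝ) :=
    (ContinuousLinearMap.fst ℝ ℝ ℝ).prod (-(ContinuousLinearMap.snd ℝ ℝ ℝ))
  set σ : (ℝ × ℝ) →L[ℝ] (ℝ × ℝ) :=
    (ContinuousLinearMap.fst ℝ ℝ ℝ).prod (-(ContinuousLinearMap.snd ℝ ℝ ℝ)) with hσ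
  have hσval : ∀ p : ℝ × ℝ, σ p = (p.1, -p.2) := fun p => rfl
  have hFσ : ∀ p : ℝ × ℝ, F (σ p) = F p := by
    intro p; rw [hσval]; exact ((hsym p.1 p.2).2.1).symm
  have hfix : σ ((x, 0) : ℝ × ℝ) = (x, 0) := by simp [hσval]
  have h1 := fderiv_clm_symm F σ hFσ (x, 0) (by rwa [hfix]) ((0, 1) : ℝ × ℝ)
  rw [hfix] at h1
  have h1' : fderiv ℝ F (x, 0) (0, 1) = - fderiv ℝ F (x, 0) (0, 1) := by
    have : σ ((0,1) : ℝ × ℝ) = ((0 : ℝ), (-1 : ℝ)) := by simp [hσval]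
    rw [this] at h1
    have : ((0 : ℝ), (-1 : ℝ)) = -((0,1) : ℝ × ℝ) := by simp [Prod.ext_iff]
    rw [this, map_neg] at h1
    exact h1
  have hy0 : fderiv ℝ F (x, 0) (0, 1) = 0 := by linarith [h1']
  -- x-reflection
  set τ : (ℝ × ℝ) →L[ℝ] (ℝ × ℝ) :=
    (-(ContinuousLinearMap.fst ℝ ℝ ℝ)).prod (ContinuousLinearMap.snd ℝ ℝ ℝ) with hτ
  have hτval : ∀ p : ℝ × ℝ, τ p = (-p.1, p.2) := fun p => rfl
  have hFτ : ∀ p : ℝ × ℝ, F (τ p) = F p := by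
    intro p; rw [hτval]; exact ((hsym p.1 p.2).1).symm
  have hτp : τ ((-x, 0) : ℝ × ℝ) = (x, 0) := by simp [hτval]
  have h2 := fderiv_clm_symm F τ hFτ (-x, 0) (by rwa [hτp])
  rw [hτp] at h2
  have h2a := h2 ((1,0) : ℝ × ℝ)
  have h2b := h2 ((0,1) : ℝ × ℝ)
  have hv1 : τ ((1,0) : ℝ × ℝ) = ((-1 : ℝ), (0 : ℝ)) := by simp [hτval]
  have hv2 : τ ((0,1) : ℝ × ℝ) = ((0 : ℝ), (1 : ℝ)) := by simp [hτval]
  rw [hv1] at h2a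
  rw [hv2] at h2b
  have hneg : ((-1 : ℝ), (0 : ℝ)) = -((1,0) : ℝ × ℝ) := by simp [Prod.ext_iff]
  rw [hneg, map_neg] at h2a
  refine ⟨hy0, ?_⟩
  simp only [gradF, Prod.ext_iff]
  exact ⟨h2a, by rw [h2b, hy0]⟩

/-- for the symmetric two-vortex ansatz, the reduced ODE system for
`(α, β)` produces a solution of the reduced dynamical law
`ȧ_j − λ d_j 𝕁 ȧ_j = −(1/π) ∇_{a_j} W(a)` (degrees `d₁ = 1, d₂ = −1`, momentum branch
`q(a) = 2π(a₁ − a₂)`), and `λα + β` is constant so the trajectory is a straight line. -/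
theorem two_vortex_symmetric_solution (lam T : ℝ) (hT : 0 < T)
    (F : ℝ × ℝ → ℝ)
    (hper : ∀ (x y : ℝ) (m n : ℤ), F (x + m, y + n) = F (x, y))
    (hsym : ∀ x y : ℝ, F (x, y) = F (-x, y) ∧ F (x, y) = F (x, -y) ∧ F (x, y) = F (y, x))
    (hFC1 : ∀ p : ℝ × ℝ, (∀ m n : ℤ, p ≠ ((m : ℝ), (n : ℝ))) → ContDiffAt ℝ 1 F p)
    (α β α' β' : ℝ → ℝ)
    (hα : ∀ t ∈ Ico (0:ℝ) T, HasDerivWithinAt α (α' t) (Ico (0:ℝ) T) t)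
    (hβ : ∀ t ∈ Ico (0:ℝ) T, HasDerivWithinAt β (β' t) (Ico (0:ℝ) T) t)
    (hODE : ∀ t ∈ Ico (0:ℝ) T,
      α' t = -2 * ((gradF F (2*α t, 0)).1 + 4*π*(α t)) / (1 + lam^2)
        ∧ β' t = 2*lam * ((gradF F (2*α t, 0)).1 + 4*π*(α t)) / (1 + lam^2))
    (hnd : ∀ t ∈ Ico (0:ℝ) T, ∀ m : ℤ, 2*α t ≠ (m : ℝ))
    (a₁ a₂ : ℝ → ℝ × ℝ)
    (ha₁ : ∀ s : ℝ, a₁ s = (0.5 + α s, 0.5 + β s))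
    (ha₂ : ∀ s : ℝ, a₂ s = (0.5 - α s, 0.5 + β s))
    (qv : ℝ → ℝ × ℝ)
    (hqv : ∀ s : ℝ, qv s = (2*π) • (a₁ s - a₂ s)) :
    (∀ t ∈ Ico (0:ℝ) T,
        HasDerivWithinAt a₁ (α' t, β' t) (Ico (0:ℝ) T) t
      ∧ HasDerivWithinAt a₂ (-(α' t), β' t) (Ico (0:ℝ) T) t
      ∧ ((α' t, β' t) : ℝ × ℝ) - (lam * 1) • Jmat (α' t, β' t)
          = (-(1/π)) • ((2*π*(1:ℝ)) • (-((-1:ℝ) • gradF F (a₁ t - a₂ t)) + qv t))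
      ∧ ((-(α' t), β' t) : ℝ × ℝ) - (lam * (-1)) • Jmat (-(α' t), β' t)
          = (-(1/π)) • ((2*π*(-1:ℝ)) • (-((1:ℝ) • gradF F (a₂ t - a₁ t)) + qv t)))
    ∧ (∀ t ∈ Ico (0:ℝ) T, lam * α t + β t = lam * α 0 + β 0) := by
  have hlam : (1:ℝ) + lam^2 ≠ 0 := by positivity
  have hpi := Real.pi_ne_zero
  constructor
  · intro t ht
    obtain ⟨hA, hB⟩ := hODE t ht
    obtain ⟨hy0, hneg⟩ := grad_props F hsym hFC1 (2*α t) (hnd t ht)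
    set c := (gradF F (2*α t, 0)).1 with hc
    have h1p : a₁ t - a₂ t = (2*α t, 0) := by
      rw [ha₁, ha₂, Prod.mk_sub_mk, Prod.mk.injEq]; constructor <;> ring
    have h2p : a₂ t - a₁ t = (-(2*α t), 0) := by
      rw [ha₁, ha₂, Prod.mk_sub_mk, Prod.mk.injEq]; constructor <;> ring
    have hgrad1 : gradF F (a₁ t - a₂ t) = (c, 0) := by
      rw [h1p]; exact Prod.ext rfl hy0
    have hgrad2 : gradF F (a₂ t - a₁ t) = (-c, 0) := by rw [h2p]; exact hneg
    have hq : qv t = (4*π*α t, 0) := by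
      rw [hqv, h1p, Prod.smul_mk, Prod.mk.injEq]; constructor <;> simp <;> ring
    refine ⟨?_, ?_, ?_, ?_⟩
    · have := ((hα t ht).const_add 0.5).prodMk ((hβ t ht).const_add 0.5)
      have he : a₁ = fun s => (0.5 + α s, 0.5 + β s) := funext ha₁
      rw [he]; exact this
    · have := ((hα t ht).const_sub 0.5).prodMk ((hβ t ht).const_add 0.5)
      have he : a₂ = fun s => (0.5 - α s, 0.5 + β s) := funext ha₂
      rw [he]; simpa using this
    · rw [hgrad1, hq, hA, hB]
      simp only [Jmat, Prod.smul_mk, Prod.mk_sub_mk, Prod.mk_add_mk, Prod.neg_mk,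
        smul_eq_mul, Prod.mk.injEq]
      constructor <;> field_simp <;> ring
    · rw [hgrad2, hq, hA, hB]
      simp only [Jmat, Prod.smul_mk, Prod.mk_sub_mk, Prod.mk_add_mk, Prod.neg_mk,
        smul_eq_mul, Prod.mk.injEq]
      constructor <;> field_simp <;> ring
  · intro t ht
    have h0 : (0:ℝ) ∈ Ico (0:ℝ) T := ⟨le_refl 0, hT⟩
    have hderiv : ∀ s ∈ Ico (0:ℝ) T,
        HasDerivWithinAt (fun s => lam * α s + β s) (lam * α' s + β' s) (Ico (0:ℝ) T) s :=
      fun s hs => ((hα s hs).const_mul lam).add (hβ s hs)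
    have hzero : ∀ s ∈ Ico (0:ℝ) T, ‖lam * α' s + β' s‖ ≤ 0 := by
      intro s hs
      obtain ⟨hA, hB⟩ := hODE s hs
      have : lam * α' s + β' s = 0 := by rw [hA, hB]; field_simp; ring
      simp [this]
    have := (convex_Ico (0:ℝ) T).norm_image_sub_le_of_norm_hasDerivWithin_le
      hderiv hzero h0 ht
    simp only [zero_mul] at this
    have := norm_le_zero_iff.mp this
    linarith [sub_eq_zero.mp this]
end
end

section
/- Let T > 0, C ≥ 0, and let ζ : [0,T] → [0,∞) be Lipschitz with ζ(0) = 0, such that for almost every t ∈ [0,T] one has |ζ'(t)| ≤ C ζ(t) + ∫_0^t |ζ'(s)| ds. Then ζ(t) = 0 for all t ∈ [0,T]. -/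
noncomputable section

open Real Set MeasureTheory Filter

private lemma abs_deriv_le_of_lipschitz {g : ℝ → ℝ} {K : NNReal} (hg : LipschitzWith K g)
    {x d : ℝ} (h : HasDerivAt g d x) : |d| ≤ K := by
  rw [hasDerivAt_iff_tendsto_slope] at h
  have habs : Tendsto (fun y => |slope g x y|) (nhdsWithin x {x}ᶜ) (nhds |d|) := h.abs
  refine le_of_tendsto habs ?_
  filter_upwards [self_mem_nhdsWithin] with y hy
  have hxy : y ≠ x := hy
  have h1 : |g y - g x| ≤ (K : ℝ) * |y - x| := by
    have := hg.dist_le_mul y x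
    simpa [Real.dist_eq] using this
  have h2 : (0:ℝ) < |y - x| := abs_pos.2 (sub_ne_zero.2 hxy)
  have : slope g x y = (g y - g x) / (y - x) := slope_def_field g x y
  rw [this, abs_div]
  exact (div_le_iff₀ h2).2 h1

/-- Gronwall-type uniqueness lemma: if `ζ : [0,T] → [0,∞)` is Lipschitz
with `ζ(0) = 0` and for a.e. `t ∈ [0,T]` one has
`|ζ'(t)| ≤ C ζ(t) + ∫_0^t |ζ'(s)| ds`, then `ζ ≡ 0` on `[0,T]`. -/
theorem gronwall_type_uniqueness (T C : ℝ) (hT : 0 < T) (hC : 0 ≤ C)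
    (ζ : ℝ → ℝ) (K : NNReal)
    (hLip : LipschitzOnWith K ζ (Icc (0:ℝ) T))
    (hnonneg : ∀ t ∈ Icc (0:ℝ) T, 0 ≤ ζ t)
    (h0 : ζ 0 = 0)
    (hae : ∀ᵐ t ∂(volume.restrict (Icc (0:ℝ) T)),
      |deriv ζ t| ≤ C * ζ t + ∫ s in (0:ℝ)..t, |deriv ζ s|) :
    ∀ t ∈ Icc (0:ℝ) T, ζ t = 0 := by
  classical
  obtain ⟨g, hgK, hgeq⟩ := hLip.extend_real
  have hgdist : ∀ x y : ℝ, |g x - g y| ≤ (K:ℝ) * |x - y| := by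
    intro x y
    have := hgK.dist_le_mul x y
    simpa [Real.dist_eq] using this
  have hgcont : Continuous g := hgK.continuous
  -- the two monotone shifts
  have hm : Monotone (fun t : ℝ => g t + K * t) := by
    intro x y hxy
    have h := abs_le.1 (hgdist x y)
    have habs : |x - y| = y - x := by
      rw [abs_sub_comm, abs_of_nonneg (sub_nonneg.2 hxy)]
    rw [habs] at h
    simp only
    nlinarith [h.1, h.2]
  have hp : Monotone (fun t : ℝ => (K:ℝ) * t - g t) := by
    intro x y hxy
    have h := abs_le.1 (hgdist x y)
    have habs : |x - y| = y - x := by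
      rw [abs_sub_comm, abs_of_nonneg (sub_nonneg.2 hxy)]
    rw [habs] at h
    simp only
    nlinarith [h.1, h.2]
  set μ := hm.stieltjesFunction.measure with hμdef
  have hms : ∀ x, hm.stieltjesFunction x = g x + K * x := by
    intro x
    rw [Monotone.stieltjesFunction_eq]
    refine rightLim_eq_of_tendsto (h := ?_) ?_
    · exact nhdsGT_neBot x
    · exact ((hgcont.add (continuous_const.mul continuous_id)).tendsto x).mono_left
        nhdsWithin_le_nhds
  have hps : ∀ x, hp.stieltjesFunction x = (K:ℝ) * x - g x := by
    intro x
    rw [Monotone.stieltjesFunction_eq]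
    refine rightLim_eq_of_tendsto (h := ?_) ?_
    · exact nhdsGT_neBot x
    · exact (((continuous_const.mul continuous_id).sub hgcont).tendsto x).mono_left
        nhdsWithin_le_nhds
  have hμIoc : ∀ a b : ℝ, μ (Ioc a b) = ENNReal.ofReal ((g b + K*b) - (g a + K*a)) := by
    intro a b
    rw [hμdef, StieltjesFunction.measure_Ioc, hms, hms]
  -- the sum of the two Stieltjes measures is (2K) • volume
  have hsum : μ + hp.stieltjesFunction.measure = (ENNReal.ofReal (2*K)) • volume := by
    rw [hμdef, ← StieltjesFunction.measure_add]
    refine Measure.ext_of_Ioc _ _ (fun a b hab => ?_)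
    rw [StieltjesFunction.measure_Ioc, Measure.smul_apply, Real.volume_Ioc, smul_eq_mul,
      ← ENNReal.ofReal_mul (by positivity), StieltjesFunction.add_apply,
      StieltjesFunction.add_apply, hms, hms, hps, hps]
    congr 1
    ring
  have hle : μ ≤ (ENNReal.ofReal (2*K)) • volume := by
    rw [← hsum]
    exact Measure.le_add_right le_rfl
  have hac : μ ≪ (volume : Measure ℝ) := Measure.absolutelyContinuous_of_le_smul hle
  set d : ℝ → ℝ := fun x => (μ.rnDeriv volume x).toReal with hd_def
  have hd_meas : Measurable d := (Measure.measurable_rnDeriv μ volume).ennreal_toReal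
  have hm_deriv : ∀ᵐ x ∂(volume : Measure ℝ), HasDerivAt (fun t : ℝ => g t + K*t) (d x) x :=
    hm.ae_hasDerivAt
  have hg_deriv : ∀ᵐ x ∂(volume : Measure ℝ), HasDerivAt g (d x - K) x := by
    filter_upwards [hm_deriv] with x hx
    have h2 : HasDerivAt (fun t : ℝ => (K:ℝ) * t) K x := by
      simpa using (hasDerivAt_id x).const_mul (K:ℝ)
    have := hx.sub h2
    exact this.congr_of_eventuallyEq (Filter.Eventually.of_forall fun t => by simp)
  have hg_deriv_eq : ∀ᵐ x ∂(volume : Measure ℝ), deriv g x = d x - K ∧ |deriv g x| ≤ K := by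
    filter_upwards [hg_deriv] with x hx
    refine ⟨hx.deriv, ?_⟩
    rw [hx.deriv]
    exact abs_deriv_le_of_lipschitz hgK hx
  -- derivatives of ζ and g agree on the interior
  have hζg_deriv : ∀ x ∈ Ioo (0:ℝ) T, deriv ζ x = deriv g x := by
    intro x hx
    apply Filter.EventuallyEq.deriv_eq
    filter_upwards [Icc_mem_nhds hx.1 hx.2] with y hy
    exact hgeq hy
  -- key a.e. facts on Ioc 0 t
  have hae_Ioc : ∀ t : ℝ, 0 < t → t ≤ T →
      (∀ᵐ x ∂(volume.restrict (Ioc (0:ℝ) t)), deriv ζ x = d x - K ∧ |deriv ζ x| ≤ K) := by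
    intro t ht0 htT
    have h2 : ∀ᵐ x ∂(volume : Measure ℝ), x ≠ t := by
      rw [ae_iff]
      simpa using measure_singleton t
    filter_upwards [ae_restrict_mem measurableSet_Ioc, ae_restrict_of_ae h2,
      ae_restrict_of_ae hg_deriv_eq] with x hx hxt hgx
    have hxIoo : x ∈ Ioo (0:ℝ) T := ⟨hx.1, lt_of_lt_of_le (lt_of_le_of_ne hx.2 hxt) htT⟩
    rw [hζg_deriv x hxIoo]
    exact hgx
  -- integrability of |deriv ζ| on Ioc 0 t
  have hf_int : ∀ t : ℝ, 0 < t → t ≤ T →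
      IntegrableOn (fun s => |deriv ζ s|) (Ioc (0:ℝ) t) volume := by
    intro t ht0 htT
    refine Integrable.mono' (integrable_const (K:ℝ)) ((measurable_deriv ζ).abs).aestronglyMeasurable ?_
    filter_upwards [hae_Ioc t ht0 htT] with x hx
    simpa [Real.norm_eq_abs, abs_abs] using hx.2
  -- fundamental theorem of calculus inequality
  have hFTC : ∀ t : ℝ, 0 < t → t ≤ T → ζ t ≤ ∫ s in Ioc (0:ℝ) t, |deriv ζ s| := by
    intro t ht0 htT
    have h0g : g 0 = 0 := by
      rw [← hgeq (left_mem_Icc.2 hT.le)]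
      exact h0
    have hgt : g t = ζ t := (hgeq ⟨ht0.le, htT⟩).symm
    have hζt : 0 ≤ ζ t := hnonneg t ⟨ht0.le, htT⟩
    have hμt : μ (Ioc 0 t) = ENNReal.ofReal (ζ t + K * t) := by
      rw [hμIoc 0 t, h0g, hgt]
      congr 1
      ring
    have hd_int : IntegrableOn d (Ioc (0:ℝ) t) volume := by
      refine Integrable.mono' (integrable_const (2*(K:ℝ))) hd_meas.aestronglyMeasurable ?_
      filter_upwards [ae_restrict_of_ae hg_deriv_eq] with x hx
      have hdx : d x = deriv g x + K := by linarith [hx.1]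
      rw [Real.norm_eq_abs, hdx]
      have := abs_le.1 hx.2
      rw [abs_le]
      constructor <;> linarith [this.1, this.2]
    have htoReal : ∫ x in Ioc (0:ℝ) t, d x ∂volume = (μ (Ioc 0 t)).toReal := by
      rw [hd_def]
      rw [integral_toReal ((Measure.measurable_rnDeriv μ volume).aemeasurable.restrict)
        (ae_restrict_of_ae (Measure.rnDeriv_lt_top μ volume)),
        Measure.setLIntegral_rnDeriv hac]
    have hval : ∫ x in Ioc (0:ℝ) t, d x ∂volume = ζ t + K * t := by
      rw [htoReal, hμt, ENNReal.toReal_ofReal (by positivity)]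
    have hsubeq : ∫ x in Ioc (0:ℝ) t, (d x - K) ∂volume = ζ t := by
      rw [integral_sub hd_int (integrableOn_const (by
        rw [Real.volume_Ioc]; exact ENNReal.ofReal_ne_top))]
      rw [hval, setIntegral_const, Real.volume_real_Ioc_of_le ht0.le,
        smul_eq_mul]
      ring
    rw [← hsubeq]
    refine setIntegral_mono_ae_restrict (hd_int.sub (integrableOn_const (by
      rw [Real.volume_Ioc]; exact ENNReal.ofReal_ne_top))) (hf_int t ht0 htT) ?_
    filter_upwards [hae_Ioc t ht0 htT] with x hx
    rw [← hx.1]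
    exact le_abs_self _
  -- the primitive of |deriv ζ|
  set F : ℝ → ℝ := fun t => ∫ s in (0:ℝ)..t, |deriv ζ s| with hF_def
  have hF_eq : ∀ t : ℝ, 0 ≤ t → F t = ∫ s in Ioc (0:ℝ) t, |deriv ζ s| := by
    intro t ht
    rw [hF_def]
    exact intervalIntegral.integral_of_le ht
  have hζF : ∀ t ∈ Icc (0:ℝ) T, ζ t ≤ F t := by
    intro t ht
    rcases eq_or_lt_of_le ht.1 with h | h
    · rw [← h, hF_def]
      simp [h0]
    · rw [hF_eq t ht.1]
      exact hFTC t h ht.2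
  have hB : ∀ᵐ x ∂(volume.restrict (Icc (0:ℝ) T)), |deriv ζ x| ≤ (C+1) * F x := by
    filter_upwards [hae, ae_restrict_mem measurableSet_Icc] with x hx hmem
    have h1 : ζ x ≤ F x := hζF x hmem
    have h2 : 0 ≤ ζ x := hnonneg x hmem
    calc |deriv ζ x| ≤ C * ζ x + F x := hx
      _ ≤ C * F x + F x := by nlinarith
      _ = (C+1) * F x := by ring
  -- the Gronwall iteration
  have hind : ∀ n : ℕ, ∀ t ∈ Icc (0:ℝ) T,
      F t ≤ ((K:ℝ)*T) * ((C+1)*t)^n / n.factorial := by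
    intro n
    induction n with
    | zero =>
      intro t ht
      simp only [pow_zero, Nat.factorial_zero, Nat.cast_one, mul_one, div_one]
      rcases eq_or_lt_of_le ht.1 with h | h
      · rw [← h, hF_def]
        simp only [intervalIntegral.integral_same]
        positivity
      · rw [hF_eq t ht.1]
        have hmono := setIntegral_mono_ae_restrict (hf_int t h ht.2)
          (integrableOn_const (C := (K:ℝ)) (by rw [Real.volume_Ioc]; exact ENNReal.ofReal_ne_top))
          (by filter_upwards [hae_Ioc t h ht.2] with x hx using hx.2)
        refine hmono.trans ?_
        rw [setIntegral_const, Real.volume_real_Ioc_of_le h.le, smul_eq_mul]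
        have h5 : t * (K:ℝ) ≤ T * (K:ℝ) :=
          mul_le_mul_of_nonneg_right ht.2 (NNReal.coe_nonneg K)
        linarith
    | succ n ih =>
      intro t ht
      rcases eq_or_lt_of_le ht.1 with h | h
      · rw [← h, hF_def]
        simp only [intervalIntegral.integral_same]
        positivity
      · rw [hF_eq t ht.1]
        have hsub : Ioc (0:ℝ) t ⊆ Icc (0:ℝ) T := fun x hx => ⟨hx.1.le, hx.2.trans ht.2⟩
        have hC1 : (0:ℝ) ≤ C + 1 := by linarith
        have hstep : ∀ᵐ x ∂(volume.restrict (Ioc (0:ℝ) t)),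
            |deriv ζ x| ≤ (C+1)*(((K:ℝ)*T)*((C+1)*x)^n / n.factorial) := by
          filter_upwards [ae_restrict_of_ae_restrict_of_subset hsub hB,
            ae_restrict_mem measurableSet_Ioc] with x hx hmem
          calc |deriv ζ x| ≤ (C+1) * F x := hx
            _ ≤ _ := mul_le_mul_of_nonneg_left (ih x (hsub hmem)) hC1
        have hpoly_cont : Continuous (fun x : ℝ => (C+1)*(((K:ℝ)*T)*((C+1)*x)^n / n.factorial)) := by
          fun_prop
        have hpoly_int : IntegrableOn
            (fun x : ℝ => (C+1)*(((K:ℝ)*T)*((C+1)*x)^n / n.factorial)) (Ioc (0:ℝ) t) volume :=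
          (hpoly_cont.integrableOn_Ioc)
        have hmono := setIntegral_mono_ae_restrict (hf_int t h ht.2) hpoly_int hstep
        refine hmono.trans ?_
        have hfun : (fun x : ℝ => (C+1)*(((K:ℝ)*T)*((C+1)*x)^n / n.factorial))
            = fun x : ℝ => ((C+1)^(n+1) * ((K:ℝ)*T) / n.factorial) * x^n := by
          funext x
          rw [mul_pow]
          ring
        have hconv : (∫ x in (0:ℝ)..t, ((C+1)^(n+1) * ((K:ℝ)*T) / n.factorial) * x^n)
            = ∫ x in Ioc (0:ℝ) t, ((C+1)^(n+1) * ((K:ℝ)*T) / n.factorial) * x^n :=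
          intervalIntegral.integral_of_le h.le
        have hcmul : (∫ x in (0:ℝ)..t, ((C+1)^(n+1) * ((K:ℝ)*T) / n.factorial) * x^n)
            = ((C+1)^(n+1) * ((K:ℝ)*T) / n.factorial) * ∫ x in (0:ℝ)..t, x^n :=
          intervalIntegral.integral_const_mul _ _
        have hpow : (∫ x in (0:ℝ)..t, x^n) = (t^(n+1) - 0^(n+1)) / (n+1) :=
          integral_pow n
        rw [hfun, ← hconv, hcmul, hpow]
        have hfacpos : (0:ℝ) < n.factorial := by positivity
        have hfacsucc : ((n+1).factorial : ℝ) = (n+1) * n.factorial := by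
          rw [Nat.factorial_succ]
          push_cast
          ring
        have hn1 : (0:ℝ) < (n:ℝ) + 1 := by positivity
        refine le_of_eq ?_
        rw [mul_pow, hfacsucc, zero_pow (Nat.succ_ne_zero n), sub_zero]
        field_simp
  -- conclude
  intro t ht
  have h1 : ζ t ≤ F t := hζF t ht
  have h2 : Tendsto (fun n : ℕ => ((K:ℝ)*T) * ((C+1)*t)^n / n.factorial) atTop (nhds 0) := by
    have h3 := FloorSemiring.tendsto_pow_div_factorial_atTop ((C+1)*t)
    have h4 := h3.const_mul ((K:ℝ)*T)
    simpa [mul_div_assoc] using h4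
  have hF0 : F t ≤ 0 := ge_of_tendsto' h2 (fun n => hind n t ht)
  exact le_antisymm (h1.trans hF0) (hnonneg t ht)
end
end
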